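/- arXiv:2211.02781 — 2 statements merged into one kernel-verified Lean document; each statement's English description precedes it below -/
import Mathlib

section
/- Let W, V be invertible q×q matrices and A, B be s×q matrices. Set c = ‖V^{−1}‖_∞, φ₁ = ‖W^{−1} − V^{−1}‖_∞, φ₂ = ‖W − V‖_∞, φ₃ = ‖A − B‖_∞, and φ = ‖A W^{−1} − B V^{−1}‖_∞, and let φ_B = ‖B V^{−1}‖_∞. Then φ ≤ φ₃ φ₁ + φ_B φ₂ (c + φ₁) + φ₃ c. If moreover φ₂ c < 1, then φ ≤ (φ₃ + φ_B φ₂) · c / (1 − φ₂ c). -/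
open Matrix

attribute [local instance] Matrix.linftyOpNormedAddCommGroup Matrix.linftyOpNormedRing

/-- The maximum absolute row sum norm (operator norm induced by the `ℓ∞` vector norm). -/
noncomputable def rowSumNorm {s q : ℕ} (M : Matrix (Fin s) (Fin q) ℝ) : ℝ :=
  ⨆ i, ∑ j, |M i j|

lemma rowSumNorm_eq {s q : ℕ} (M : Matrix (Fin s) (Fin q) ℝ) : rowSumNorm M = ‖M‖ := by
  rw [Matrix.linfty_opNorm_def, rowSumNorm, Finset.sup_univ_eq_ciSup, NNReal.coe_iSup]
  simp [Real.norm_eq_abs]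

theorem stmt_4 {s q : ℕ} (hq : 0 < q) (hs : 0 < s)
    (W V : Matrix (Fin q) (Fin q) ℝ) (A B : Matrix (Fin s) (Fin q) ℝ)
    (hW : IsUnit W.det) (hV : IsUnit V.det)
    (c φ₁ φ₂ φ₃ φ φB : ℝ)
    (hc : c = rowSumNorm V⁻¹)
    (hφ₁ : φ₁ = rowSumNorm (W⁻¹ - V⁻¹))
    (hφ₂ : φ₂ = rowSumNorm (W - V))
    (hφ₃ : φ₃ = rowSumNorm (A - B))
    (hφ : φ = rowSumNorm (A * W⁻¹ - B * V⁻¹))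
    (hφB : φB = rowSumNorm (B * V⁻¹)) :
    φ ≤ φ₃ * φ₁ + φB * φ₂ * (c + φ₁) + φ₃ * c ∧
      (φ₂ * c < 1 → φ ≤ (φ₃ + φB * φ₂) * c / (1 - φ₂ * c)) := by
  rw [rowSumNorm_eq] at hc hφ₁ hφ₂ hφ₃ hφ hφB
  have hVV : V⁻¹ * V = 1 := nonsing_inv_mul V hV
  have hWW : W * W⁻¹ = 1 := mul_nonsing_inv W hW
  have hWinv : ‖W⁻¹‖ ≤ c + φ₁ := by
    calc ‖W⁻¹‖ = ‖(W⁻¹ - V⁻¹) + V⁻¹‖ := by rw [sub_add_cancel]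
    _ ≤ ‖W⁻¹ - V⁻¹‖ + ‖V⁻¹‖ := norm_add_le _ _
    _ = c + φ₁ := by rw [hc, hφ₁]; ring
  have h0c : 0 ≤ c := hc ▸ norm_nonneg _
  have h01 : 0 ≤ φ₁ := hφ₁ ▸ norm_nonneg _
  have h02 : 0 ≤ φ₂ := hφ₂ ▸ norm_nonneg _
  have h03 : 0 ≤ φ₃ := hφ₃ ▸ norm_nonneg _
  have h0B : 0 ≤ φB := hφB ▸ norm_nonneg _
  have hVW : ‖V - W‖ = φ₂ := by rw [hφ₂, norm_sub_rev]
  have key : A * W⁻¹ - B * V⁻¹ =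
      (A - B) * (W⁻¹ - V⁻¹) + B * V⁻¹ * (V - W) * W⁻¹ + (A - B) * V⁻¹ := by
    have h1 : B * V⁻¹ * (V - W) * W⁻¹ = B * W⁻¹ - B * V⁻¹ := by
      rw [Matrix.mul_sub, Matrix.sub_mul, Matrix.mul_assoc B V⁻¹ V, hVV,
        Matrix.mul_one, Matrix.mul_assoc, Matrix.mul_assoc, hWW, Matrix.mul_one]
    rw [h1, Matrix.sub_mul, Matrix.sub_mul, Matrix.mul_sub, Matrix.mul_sub]
    abel
  have t1 : ‖(A - B) * (W⁻¹ - V⁻¹)‖ ≤ φ₃ * φ₁ :=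
    (Matrix.linfty_opNorm_mul _ _).trans (le_of_eq (by rw [hφ₃, hφ₁]))
  have t2 : ‖B * V⁻¹ * (V - W) * W⁻¹‖ ≤ φB * φ₂ * (c + φ₁) := by
    calc ‖B * V⁻¹ * (V - W) * W⁻¹‖ ≤ ‖B * V⁻¹ * (V - W)‖ * ‖W⁻¹‖ :=
        Matrix.linfty_opNorm_mul _ _
      _ ≤ ‖B * V⁻¹‖ * ‖V - W‖ * ‖W⁻¹‖ :=
        mul_le_mul_of_nonneg_right (Matrix.linfty_opNorm_mul _ _) (norm_nonneg _)
      _ = φB * φ₂ * ‖W⁻¹‖ := by rw [hφB, hVW]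
      _ ≤ φB * φ₂ * (c + φ₁) :=
        mul_le_mul_of_nonneg_left hWinv (mul_nonneg h0B h02)
  have t3 : ‖(A - B) * V⁻¹‖ ≤ φ₃ * c :=
    (Matrix.linfty_opNorm_mul _ _).trans (le_of_eq (by rw [hφ₃, hc]))
  have hmain : φ ≤ φ₃ * φ₁ + φB * φ₂ * (c + φ₁) + φ₃ * c := by
    rw [hφ, key]
    exact ((norm_add_le _ _).trans
      (add_le_add (norm_add_le _ _) le_rfl)).trans (add_le_add (add_le_add t1 t2) t3)
  refine ⟨hmain, fun h => ?_⟩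
  have key2 : W⁻¹ - V⁻¹ = V⁻¹ * (V - W) * W⁻¹ := by
    rw [Matrix.mul_sub, Matrix.sub_mul, hVV, Matrix.one_mul, Matrix.mul_assoc, hWW,
      Matrix.mul_one]
  have hφ₁' : ‖W⁻¹ - V⁻¹‖ ≤ c * φ₂ * (c + φ₁) := by
    rw [key2]
    calc ‖V⁻¹ * (V - W) * W⁻¹‖ ≤ ‖V⁻¹ * (V - W)‖ * ‖W⁻¹‖ := Matrix.linfty_opNorm_mul _ _
      _ ≤ ‖V⁻¹‖ * ‖V - W‖ * ‖W⁻¹‖ :=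
        mul_le_mul_of_nonneg_right (Matrix.linfty_opNorm_mul _ _) (norm_nonneg _)
      _ = c * φ₂ * ‖W⁻¹‖ := by rw [hc, hVW]
      _ ≤ c * φ₂ * (c + φ₁) := mul_le_mul_of_nonneg_left hWinv (mul_nonneg h0c h02)
  rw [← hφ₁] at hφ₁'
  have hpos : 0 < 1 - φ₂ * c := by linarith
  rw [le_div_iff₀ hpos]
  nlinarith [mul_nonneg h0B h02, mul_nonneg h03 h02, mul_nonneg (mul_nonneg h03 h02) h0c]
end

section
/- Let X be an n×p matrix whose rows x_i satisfy ‖x_i‖_∞ ≤ C_x, let f'' : ℝ×ℝ → ℝ be C_L-Lipschitz in its first argument, and let θ̃, θ* ∈ ℝ^p. Then for any t ∈ [0,1] and responses y_i, the vector v(t) = (1/n) Σᵢ xᵢ xᵢ^⊤ [f''((θ* + t(θ̃ − θ*))^⊤ xᵢ, yᵢ) − f''(θ̃^⊤ xᵢ, yᵢ)](θ̃ − θ*) satisfies ‖v(t)‖_∞ ≤ (C_L C_x / n) ‖X(θ̃ − θ*)‖₂². -/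
open Finset

theorem stmt_7 {n p : ℕ} (hn : 0 < n)
    (x : Fin n → Fin p → ℝ) (y : Fin n → ℝ)
    (CL Cx : ℝ) (hCL : 0 ≤ CL) (hCx : 0 ≤ Cx)
    (hx : ∀ i j, |x i j| ≤ Cx)
    (f'' : ℝ → ℝ → ℝ)
    (hLip : ∀ a b yy : ℝ, |f'' a yy - f'' b yy| ≤ CL * |a - b|)
    (θt θs : Fin p → ℝ) (t : ℝ) (ht0 : 0 ≤ t) (ht1 : t ≤ 1) :
    ∀ j : Fin p,
      |(1 / (n : ℝ)) * ∑ i, x i j * (∑ l, x i l * (θt l - θs l)) *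
          (f'' (∑ l, (θs l + t * (θt l - θs l)) * x i l) (y i)
            - f'' (∑ l, θt l * x i l) (y i))|
        ≤ (CL * Cx / (n : ℝ)) * ∑ i, (∑ l, x i l * (θt l - θs l)) ^ 2 := by
  intro j
  have hn' : (0:ℝ) < n := by exact_mod_cast hn
  set w : Fin n → ℝ := fun i => ∑ l, x i l * (θt l - θs l) with hw
  have key : ∀ i : Fin n,
      |x i j * w i *
        (f'' (∑ l, (θs l + t * (θt l - θs l)) * x i l) (y i)
          - f'' (∑ l, θt l * x i l) (y i))| ≤ CL * Cx * (w i) ^ 2 := by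
    intro i
    have harg : (∑ l, (θs l + t * (θt l - θs l)) * x i l) - (∑ l, θt l * x i l)
        = -(1 - t) * w i := by
      rw [hw]
      simp only [Finset.mul_sum, ← Finset.sum_sub_distrib]
      apply Finset.sum_congr rfl
      intro l _
      ring
    have hdiff : |f'' (∑ l, (θs l + t * (θt l - θs l)) * x i l) (y i)
        - f'' (∑ l, θt l * x i l) (y i)| ≤ CL * |w i| := by
      refine (hLip _ _ _).trans ?_
      rw [harg]
      have : |(-(1 - t) * w i)| = (1 - t) * |w i| := by
        rw [abs_mul, abs_neg, abs_of_nonneg (by linarith)]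
      rw [this]
      have h1 : (1 - t) ≤ 1 := by linarith
      have := mul_le_mul_of_nonneg_right h1 (abs_nonneg (w i))
      nlinarith [abs_nonneg (w i)]
    calc |x i j * w i *
        (f'' (∑ l, (θs l + t * (θt l - θs l)) * x i l) (y i)
          - f'' (∑ l, θt l * x i l) (y i))|
        = |x i j| * |w i| * |f'' (∑ l, (θs l + t * (θt l - θs l)) * x i l) (y i)
          - f'' (∑ l, θt l * x i l) (y i)| := by rw [abs_mul, abs_mul]
      _ ≤ Cx * |w i| * (CL * |w i|) := by
          apply mul_le_mul (mul_le_mul_of_nonneg_right (hx i j) (abs_nonneg _)) hdiff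
            (abs_nonneg _) (by positivity)
      _ = CL * Cx * (w i) ^ 2 := by rw [← sq_abs (w i)]; ring
  calc |(1 / (n : ℝ)) * ∑ i, x i j * w i *
          (f'' (∑ l, (θs l + t * (θt l - θs l)) * x i l) (y i)
            - f'' (∑ l, θt l * x i l) (y i))|
      ≤ (1 / (n : ℝ)) * ∑ i, |x i j * w i *
          (f'' (∑ l, (θs l + t * (θt l - θs l)) * x i l) (y i)
            - f'' (∑ l, θt l * x i l) (y i))| := by
        rw [abs_mul, abs_of_pos (by positivity : (0:ℝ) < 1 / n)]
        exact mul_le_mul_of_nonneg_left (Finset.abs_sum_le_sum_abs _ _) (by positivity)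
    _ ≤ (1 / (n : ℝ)) * ∑ i, CL * Cx * (w i) ^ 2 := by
        apply mul_le_mul_of_nonneg_left (Finset.sum_le_sum fun i _ => key i) (by positivity)
    _ = (CL * Cx / (n : ℝ)) * ∑ i, (w i) ^ 2 := by
        rw [← Finset.mul_sum]
        ring
end
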